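/- Let g : ℝ → ℝ have finite total variation V_{−K}^{K}(g) on every interval [−K, K] with K > 0, and suppose V := sup_{K>0} V_{−K}^{K}(g) is finite. Then for all real-valued random variables X and Y with cumulative distribution functions F_X and F_Y, |E[g(X)] − E[g(Y)]| ≤ V · sup_{t ∈ ℝ} |F_X(t) − F_Y(t)|. -/

import Mathlib

open Filter MeasureTheory Set

/-- The cumulative distribution function of a real random variable `X` under `P`. -/
noncomputable def rvCdf {Ω : Type*} [MeasurableSpace Ω] (P : MeasureTheory.Measure Ω)
    (X : Ω → ℝ) (t : ℝ) : ℝ :=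
  (P {ω | X ω ≤ t}).toReal

open Topology

lemma probComplToReal {Ω : Type*} [MeasurableSpace Ω] (P : Measure Ω) [IsProbabilityMeasure P]
    {s : Set Ω} (hs : MeasurableSet s) : (P sᶜ).toReal = 1 - (P s).toReal := by
  rw [measure_compl hs (measure_ne_top _ _), measure_univ,
    ENNReal.toReal_sub_of_le prob_le_one ENNReal.one_ne_top, ENNReal.toReal_one]

lemma layerRep {Ω : Type*} [MeasurableSpace Ω] (P : Measure Ω) [IsProbabilityMeasure P]
    (X : Ω → ℝ) (hX : Measurable X) (p : ℝ → ℝ) (hp : Monotone p) (c : ℝ)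
    (hp0 : ∀ x, 0 ≤ p x) (hpc : ∀ x, p x ≤ c) :
    ∫ ω, p (X ω) ∂P = ∫ t in Ioc 0 c, (P {ω | t < p (X ω)}).toReal := by
  have hc : (0:ℝ) ≤ c := le_trans (hp0 0) (hpc 0)
  have hpm : Measurable p := hp.measurable
  have hmeas : Measurable fun t => P {ω | t < p (X ω)} := by
    have : Antitone fun t => P {ω | t < p (X ω)} := by
      intro t1 t2 h
      exact measure_mono fun ω hω => lt_of_le_of_lt h hω
    exact this.measurable
  have h1 : ∫ ω, p (X ω) ∂P = (∫⁻ ω, ENNReal.ofReal (p (X ω)) ∂P).toReal :=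
    integral_eq_lintegral_of_nonneg_ae (ae_of_all _ fun ω => hp0 _)
      ((hpm.comp hX).aestronglyMeasurable)
  rw [h1, lintegral_eq_lintegral_meas_lt P (ae_of_all _ fun ω => hp0 _) (hpm.comp hX).aemeasurable]
  have hsplit : ∫⁻ t in Ioi (0:ℝ), P {ω | t < p (X ω)}
      = ∫⁻ t in Ioc 0 c, P {ω | t < p (X ω)} := by
    rw [← Ioc_union_Ioi_eq_Ioi hc,
      lintegral_union measurableSet_Ioi (Ioc_disjoint_Ioi le_rfl)]
    have hz : ∫⁻ t in Ioi c, P {ω | t < p (X ω)} = 0 := by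
      rw [← lintegral_zero (μ := volume.restrict (Ioi c))]
      apply lintegral_congr_ae
      filter_upwards [ae_restrict_mem measurableSet_Ioi] with t ht
      have : {ω | t < p (X ω)} = ∅ := by
        ext ω; simp only [mem_setOf_eq, mem_empty_iff_false, iff_false, not_lt]
        exact le_trans (hpc _) (le_of_lt ht)
      rw [this, measure_empty]
    rw [hz, add_zero]
  rw [hsplit]
  rw [← integral_toReal hmeas.aemeasurable
    (ae_of_all _ fun t => lt_of_le_of_lt prob_le_one ENNReal.one_lt_top)]

lemma tendstoMeasLt {Ω : Type*} [MeasurableSpace Ω] (P : Measure Ω) [IsProbabilityMeasure P]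
    (Z : Ω → ℝ) (c : ℝ) :
    Tendsto (fun n : ℕ => (P {ω | Z ω ≤ c - 1 / (n + 1)}).toReal) atTop
      (𝓝 ((P {ω | Z ω < c}).toReal)) := by
  have hsm : Monotone fun n : ℕ => c - 1 / ((n : ℝ) + 1) := by
    intro a b hab
    have : (1:ℝ) / (b + 1) ≤ 1 / (a + 1) := by
      apply one_div_le_one_div_of_le (by positivity)
      exact_mod_cast add_le_add_left (Nat.cast_le.2 hab) 1
    dsimp only; linarith
  have hU : (⋃ n : ℕ, {ω | Z ω ≤ c - 1 / (n + 1)}) = {ω | Z ω < c} := by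
    ext ω
    simp only [mem_iUnion, mem_setOf_eq]
    constructor
    · rintro ⟨n, hn⟩
      have : (0:ℝ) < 1 / ((n:ℝ) + 1) := by positivity
      linarith
    · intro h
      obtain ⟨n, hn⟩ := exists_nat_one_div_lt (sub_pos.2 h)
      exact ⟨n, by push_cast at hn ⊢; linarith⟩
  have h1 : Tendsto (fun n : ℕ => P {ω | Z ω ≤ c - 1 / (n + 1)}) atTop
      (𝓝 (P {ω | Z ω < c})) := by
    have := tendsto_measure_iUnion_atTop (μ := P)
      (s := fun n : ℕ => {ω | Z ω ≤ c - 1 / (n + 1)})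
      (fun a b hab ω hω => le_trans hω (hsm hab))
    rwa [hU] at this
  exact (ENNReal.tendsto_toReal (measure_ne_top _ _)).comp h1

lemma ltBound {Ω₁ Ω₂ : Type*} [MeasurableSpace Ω₁] [MeasurableSpace Ω₂]
    (P₁ : Measure Ω₁) (P₂ : Measure Ω₂) [IsProbabilityMeasure P₁] [IsProbabilityMeasure P₂]
    (X : Ω₁ → ℝ) (Y : Ω₂ → ℝ) (D : ℝ)
    (hDle : ∀ t, |rvCdf P₁ X t - rvCdf P₂ Y t| ≤ D) (c : ℝ) :
    |(P₁ {ω | X ω < c}).toReal - (P₂ {ω | Y ω < c}).toReal| ≤ D := by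
  have hT : Tendsto (fun n : ℕ => |rvCdf P₁ X (c - 1 / (n + 1)) - rvCdf P₂ Y (c - 1 / (n + 1))|)
      atTop (𝓝 |(P₁ {ω | X ω < c}).toReal - (P₂ {ω | Y ω < c}).toReal|) :=
    ((tendstoMeasLt P₁ X c).sub (tendstoMeasLt P₂ Y c)).abs
  exact le_of_tendsto hT (Eventually.of_forall fun n => hDle _)

lemma upperBoundKey {Ω₁ Ω₂ : Type*} [MeasurableSpace Ω₁] [MeasurableSpace Ω₂]
    (P₁ : Measure Ω₁) (P₂ : Measure Ω₂) [IsProbabilityMeasure P₁] [IsProbabilityMeasure P₂]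
    (X : Ω₁ → ℝ) (Y : Ω₂ → ℝ) (hX : Measurable X) (hY : Measurable Y)
    (p : ℝ → ℝ) (hp : Monotone p) (D : ℝ) (hD0 : 0 ≤ D)
    (hDle : ∀ t, |rvCdf P₁ X t - rvCdf P₂ Y t| ≤ D) (t : ℝ) :
    |(P₁ {ω | t < p (X ω)}).toReal - (P₂ {ω | t < p (Y ω)}).toReal| ≤ D := by
  set S : Set ℝ := {x | t < p x} with hSdef
  have hup : ∀ {x y : ℝ}, x ≤ y → x ∈ S → y ∈ S := fun {x y} hxy hx =>
    lt_of_lt_of_le hx (hp hxy)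
  rcases eq_empty_or_nonempty S with h | h
  · have hiff : ∀ x : ℝ, ¬ (t < p x) := fun x hx => by
      rw [← mem_empty_iff_false x, ← h]; exact hx
    have eX : {ω | t < p (X ω)} = (∅ : Set Ω₁) := by ext ω; simp [hiff]
    have eY : {ω | t < p (Y ω)} = (∅ : Set Ω₂) := by ext ω; simp [hiff]
    rw [eX, eY]; simp [hD0]
  by_cases hbb : BddBelow S
  · set c₀ := sInf S with hc₀
    by_cases hc : c₀ ∈ S
    · have hS : S = Ici c₀ :=
        Subset.antisymm (fun x hx => csInf_le hbb hx) (fun x hx => hup hx hc)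
      have hiff : ∀ x : ℝ, t < p x ↔ c₀ ≤ x := fun x => by
        rw [show (t < p x) = (x ∈ S) from rfl, hS]; rfl
      have eX : {ω | t < p (X ω)} = {ω | X ω < c₀}ᶜ := by ext ω; simp [hiff, not_lt]
      have eY : {ω | t < p (Y ω)} = {ω | Y ω < c₀}ᶜ := by ext ω; simp [hiff, not_lt]
      rw [eX, eY, probComplToReal P₁ (s := {ω | X ω < c₀}) (hX measurableSet_Iio),
        probComplToReal P₂ (s := {ω | Y ω < c₀}) (hY measurableSet_Iio)]
      have h2 := ltBound P₁ P₂ X Y D hDle c₀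
      rw [abs_sub_comm] at h2
      calc |(1 - (P₁ {ω | X ω < c₀}).toReal) - (1 - (P₂ {ω | Y ω < c₀}).toReal)|
          = |(P₂ {ω | Y ω < c₀}).toReal - (P₁ {ω | X ω < c₀}).toReal| := by ring_nf
        _ ≤ D := h2
    · have hS : S = Ioi c₀ := by
        apply Subset.antisymm
        · exact fun x hx => lt_of_le_of_ne (csInf_le hbb hx) (by rintro rfl; exact hc hx)
        · intro x hx
          obtain ⟨s', hs', hsx⟩ := exists_lt_of_csInf_lt h hx
          exact hup hsx.le hs'
      have hiff : ∀ x : ℝ, t < p x ↔ c₀ < x := fun x => by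
        rw [show (t < p x) = (x ∈ S) from rfl, hS]; rfl
      have eX : {ω | t < p (X ω)} = {ω | X ω ≤ c₀}ᶜ := by ext ω; simp [hiff, not_le]
      have eY : {ω | t < p (Y ω)} = {ω | Y ω ≤ c₀}ᶜ := by ext ω; simp [hiff, not_le]
      rw [eX, eY, probComplToReal P₁ (s := {ω | X ω ≤ c₀}) (hX measurableSet_Iic),
        probComplToReal P₂ (s := {ω | Y ω ≤ c₀}) (hY measurableSet_Iic)]
      have h2 := hDle c₀
      rw [show rvCdf P₁ X c₀ = (P₁ {ω | X ω ≤ c₀}).toReal from rfl,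
        show rvCdf P₂ Y c₀ = (P₂ {ω | Y ω ≤ c₀}).toReal from rfl, abs_sub_comm] at h2
      calc |(1 - (P₁ {ω | X ω ≤ c₀}).toReal) - (1 - (P₂ {ω | Y ω ≤ c₀}).toReal)|
          = |(P₂ {ω | Y ω ≤ c₀}).toReal - (P₁ {ω | X ω ≤ c₀}).toReal| := by ring_nf
        _ ≤ D := h2
  · have hiff : ∀ x : ℝ, t < p x := by
      intro x
      rcases not_bddBelow_iff.1 hbb x with ⟨s', hs', hsx⟩
      exact hup hsx.le hs'
    have eX : {ω | t < p (X ω)} = (univ : Set Ω₁) := by ext ω; simp [hiff]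
    have eY : {ω | t < p (Y ω)} = (univ : Set Ω₂) := by ext ω; simp [hiff]
    rw [eX, eY]; simp [hD0]

lemma intPhi {Ω : Type*} [MeasurableSpace Ω] (P : Measure Ω) [IsProbabilityMeasure P]
    (X : Ω → ℝ) (p : ℝ → ℝ) (hp : Monotone p) (c : ℝ) :
    IntegrableOn (fun t => (P {ω | t < p (X ω)}).toReal) (Ioc 0 c) volume := by
  have hmeas : Measurable fun t => (P {ω | t < p (X ω)}).toReal := by
    have ha : Antitone fun t => P {ω | t < p (X ω)} := fun t1 t2 h =>
      measure_mono fun ω hω => lt_of_le_of_lt h hω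
    exact ha.measurable.ennreal_toReal
  have hone : IntegrableOn (fun _ : ℝ => (1:ℝ)) (Ioc 0 c) volume :=
    integrableOn_const measure_Ioc_lt_top.ne
  refine hone.mono' hmeas.aestronglyMeasurable ?_
  refine ae_of_all _ fun t => ?_
  rw [Real.norm_eq_abs, abs_of_nonneg ENNReal.toReal_nonneg]
  exact ENNReal.toReal_mono ENNReal.one_ne_top prob_le_one |>.trans_eq ENNReal.toReal_one

lemma coreNonneg {Ω₁ Ω₂ : Type*} [MeasurableSpace Ω₁] [MeasurableSpace Ω₂]
    (P₁ : Measure Ω₁) (P₂ : Measure Ω₂) [IsProbabilityMeasure P₁] [IsProbabilityMeasure P₂]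
    (X : Ω₁ → ℝ) (Y : Ω₂ → ℝ) (hX : Measurable X) (hY : Measurable Y)
    (p : ℝ → ℝ) (hp : Monotone p) (c : ℝ) (hp0 : ∀ x, 0 ≤ p x) (hpc : ∀ x, p x ≤ c)
    (D : ℝ) (hD0 : 0 ≤ D)
    (hDle : ∀ t, |rvCdf P₁ X t - rvCdf P₂ Y t| ≤ D) :
    |(∫ ω, p (X ω) ∂P₁) - ∫ ω, p (Y ω) ∂P₂| ≤ c * D := by
  have hc : (0:ℝ) ≤ c := le_trans (hp0 0) (hpc 0)
  rw [layerRep P₁ X hX p hp c hp0 hpc, layerRep P₂ Y hY p hp c hp0 hpc,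
    ← integral_sub (intPhi P₁ X p hp c) (intPhi P₂ Y p hp c)]
  have h1 : |∫ t in Ioc 0 c, ((P₁ {ω | t < p (X ω)}).toReal - (P₂ {ω | t < p (Y ω)}).toReal)|
      ≤ ∫ t in Ioc 0 c, |(P₁ {ω | t < p (X ω)}).toReal - (P₂ {ω | t < p (Y ω)}).toReal| :=
by
    simpa [Real.norm_eq_abs] using
      norm_integral_le_integral_norm
        (fun t => (P₁ {ω | t < p (X ω)}).toReal - (P₂ {ω | t < p (Y ω)}).toReal)
        (μ := volume.restrict (Ioc 0 c))
  refine h1.trans ?_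
  have h2 : ∫ t in Ioc 0 c,
      |(P₁ {ω | t < p (X ω)}).toReal - (P₂ {ω | t < p (Y ω)}).toReal| ≤
      ∫ _t in Ioc 0 c, D := by
    have hone : IntegrableOn (fun _ : ℝ => D) (Ioc 0 c) volume :=
      integrableOn_const measure_Ioc_lt_top.ne
    refine setIntegral_mono_on ((intPhi P₁ X p hp c).sub (intPhi P₂ Y p hp c)).abs
      hone measurableSet_Ioc ?_
    exact fun t _ht => upperBoundKey P₁ P₂ X Y hX hY p hp D hD0 hDle t
  refine h2.trans ?_
  rw [setIntegral_const, Real.volume_real_Ioc_of_le hc, smul_eq_mul, sub_zero]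

lemma coreMono {Ω₁ Ω₂ : Type*} [MeasurableSpace Ω₁] [MeasurableSpace Ω₂]
    (P₁ : Measure Ω₁) (P₂ : Measure Ω₂) [IsProbabilityMeasure P₁] [IsProbabilityMeasure P₂]
    (X : Ω₁ → ℝ) (Y : Ω₂ → ℝ) (hX : Measurable X) (hY : Measurable Y)
    (p : ℝ → ℝ) (hp : Monotone p) (m M : ℝ) (hm : ∀ x, m ≤ p x) (hM : ∀ x, p x ≤ M)
    (D : ℝ) (hD0 : 0 ≤ D)
    (hDle : ∀ t, |rvCdf P₁ X t - rvCdf P₂ Y t| ≤ D) :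
    |(∫ ω, p (X ω) ∂P₁) - ∫ ω, p (Y ω) ∂P₂| ≤ (M - m) * D := by
  have key := coreNonneg P₁ P₂ X Y hX hY (fun x => p x - m)
    (fun a b hab => by simpa using hp hab) (M - m)
    (fun x => by simpa using hm x) (fun x => by simpa using hM x) D hD0 hDle
  have hi1 : Integrable (fun ω => p (X ω)) P₁ := by
    refine (integrable_const (max |m| |M|)).mono'
      ((hp.measurable.comp hX).aestronglyMeasurable) (ae_of_all _ fun ω => ?_)
    rw [Real.norm_eq_abs, abs_le]
    constructor
    · calc -(max |m| |M|) ≤ -|m| := by simp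
        _ ≤ m := neg_abs_le m
        _ ≤ p (X ω) := hm _
    · calc p (X ω) ≤ M := hM _
        _ ≤ |M| := le_abs_self M
        _ ≤ max |m| |M| := le_max_right _ _
  have hi2 : Integrable (fun ω => p (Y ω)) P₂ := by
    refine (integrable_const (max |m| |M|)).mono'
      ((hp.measurable.comp hY).aestronglyMeasurable) (ae_of_all _ fun ω => ?_)
    rw [Real.norm_eq_abs, abs_le]
    constructor
    · calc -(max |m| |M|) ≤ -|m| := by simp
        _ ≤ m := neg_abs_le m
        _ ≤ p (Y ω) := hm _
    · calc p (Y ω) ≤ M := hM _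
        _ ≤ |M| := le_abs_self M
        _ ≤ max |m| |M| := le_max_right _ _
  rw [integral_sub hi1 (integrable_const m), integral_sub hi2 (integrable_const m),
    integral_const, integral_const, probReal_univ] at key
  simpa using key

lemma rvCdf_mem {Ω : Type*} [MeasurableSpace Ω] (P : Measure Ω) [IsProbabilityMeasure P]
    (Z : Ω → ℝ) (t : ℝ) : 0 ≤ rvCdf P Z t ∧ rvCdf P Z t ≤ 1 :=
  ⟨ENNReal.toReal_nonneg,
    (ENNReal.toReal_mono ENNReal.one_ne_top prob_le_one).trans_eq ENNReal.toReal_one⟩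

lemma integrableOfBounds {Ω : Type*} [MeasurableSpace Ω] (P : Measure Ω)
    [IsProbabilityMeasure P] (X : Ω → ℝ) (hX : Measurable X)
    (p : ℝ → ℝ) (hp : Monotone p) (m M : ℝ) (hm : ∀ x, m ≤ p x) (hM : ∀ x, p x ≤ M) :
    Integrable (fun ω => p (X ω)) P := by
  refine (integrable_const (max |m| |M|)).mono'
    ((hp.measurable.comp hX).aestronglyMeasurable) (ae_of_all _ fun ω => ?_)
  rw [Real.norm_eq_abs, abs_le]
  constructor
  · calc -(max |m| |M|) ≤ -|m| := by simp
      _ ≤ m := neg_abs_le m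
      _ ≤ p (X ω) := hm _
  · calc p (X ω) ≤ M := hM _
      _ ≤ |M| := le_abs_self M
      _ ≤ max |m| |M| := le_max_right _ _

/-- Koksma-type inequality: if `g` has finite total variation
`V = sup_{K > 0} V_{-K}^K(g)`, then `|E[g(X)] - E[g(Y)]| ≤ V · sup_t |F_X t - F_Y t|`. -/
theorem abs_integral_sub_le_variation_mul_kolmogorov
    {Ω₁ Ω₂ : Type*} [MeasurableSpace Ω₁] [MeasurableSpace Ω₂]
    (P₁ : Measure Ω₁) (P₂ : Measure Ω₂)
    [IsProbabilityMeasure P₁] [IsProbabilityMeasure P₂]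
    (X : Ω₁ → ℝ) (Y : Ω₂ → ℝ) (hX : Measurable X) (hY : Measurable Y)
    (g : ℝ → ℝ)
    (hfin : ∀ K : ℝ, 0 < K → eVariationOn g (Set.Icc (-K) K) ≠ ⊤)
    (hV : (⨆ K : ℝ, ⨆ _ : 0 < K, eVariationOn g (Set.Icc (-K) K)) ≠ ⊤) :
    |(∫ ω, g (X ω) ∂P₁) - ∫ ω, g (Y ω) ∂P₂| ≤
      (⨆ K : ℝ, ⨆ _ : 0 < K, eVariationOn g (Set.Icc (-K) K)).toReal *
        ⨆ t : ℝ, |rvCdf P₁ X t - rvCdf P₂ Y t| := by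
  set Vt := ⨆ K : ℝ, ⨆ _ : 0 < K, eVariationOn g (Set.Icc (-K) K) with hVt
  set V := Vt.toReal with hVdef
  have hV0 : 0 ≤ V := ENNReal.toReal_nonneg
  -- the Kolmogorov distance
  set D := ⨆ t : ℝ, |rvCdf P₁ X t - rvCdf P₂ Y t| with hD
  have hbddD : BddAbove (range fun t => |rvCdf P₁ X t - rvCdf P₂ Y t|) := by
    refine ⟨1, ?_⟩
    rintro _ ⟨t, rfl⟩
    obtain ⟨h1, h2⟩ := rvCdf_mem P₁ X t
    obtain ⟨h3, h4⟩ := rvCdf_mem P₂ Y t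
    rw [abs_le]; constructor <;> linarith
  have hDle : ∀ t, |rvCdf P₁ X t - rvCdf P₂ Y t| ≤ D := fun t => le_ciSup hbddD t
  have hD0 : 0 ≤ D := le_trans (abs_nonneg _) (hDle 0)
  -- total variation on univ is at most Vt
  have hU : eVariationOn g univ ≤ Vt := by
    rw [eVariationOn]
    refine iSup_le ?_
    rintro ⟨n, u, hu, -⟩
    have hne : (Finset.range (n + 1)).Nonempty := Finset.nonempty_range_iff.2 (Nat.succ_ne_zero n)
    set M := (Finset.range (n + 1)).sup' hne fun i => |u i| with hM
    have hM0 : 0 ≤ M :=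
      le_trans (abs_nonneg (u 0)) (Finset.le_sup' (f := fun i => |u i|) (Finset.mem_range.2 (Nat.succ_pos n)))
    set K := M + 1 with hK
    have hKpos : (0:ℝ) < K := by linarith
    have hmem : ∀ i : ℕ, u (min i n) ∈ Set.Icc (-K) K := by
      intro i
      have h1 : |u (min i n)| ≤ M :=
        Finset.le_sup' (f := fun i => |u i|) (Finset.mem_range.2 (Nat.lt_succ_of_le (min_le_right i n)))
      have := abs_le.1 h1
      constructor <;> [linarith [this.1]; linarith [this.2]]
    have hu' : Monotone fun i : ℕ => u (min i n) := fun a b hab => hu (min_le_min hab le_rfl)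
    have hsum := eVariationOn.sum_le (f := g) (n := n) hu' hmem
    have heq : ∑ i ∈ Finset.range n, edist (g (u (i + 1))) (g (u i)) =
        ∑ i ∈ Finset.range n, edist (g (u (min (i + 1) n))) (g (u (min i n))) := by
      refine Finset.sum_congr rfl fun i hi => ?_
      have hi' : i + 1 ≤ n := Finset.mem_range.1 hi
      rw [min_eq_left hi', min_eq_left (le_of_lt (Finset.mem_range.1 hi))]
    calc ∑ i ∈ Finset.range n, edist (g (u (i + 1))) (g (u i))
        = ∑ i ∈ Finset.range n, edist (g (u (min (i + 1) n))) (g (u (min i n))) := heq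
      _ ≤ eVariationOn g (Set.Icc (-K) K) := hsum
      _ ≤ Vt := le_iSup₂ (f := fun (K : ℝ) (_ : 0 < K) => eVariationOn g (Set.Icc (-K) K)) K hKpos
  have hbv : BoundedVariationOn g univ := fun h => hV (top_le_iff.1 (h ▸ hU))
  have hlbv : LocallyBoundedVariationOn g univ := hbv.locallyBoundedVariationOn
  set v : ℝ → ℝ := fun x => variationOnFromTo g univ 0 x with hv
  have hvadd : ∀ a b : ℝ, variationOnFromTo g univ a b = v b - v a := by
    intro a b
    have := variationOnFromTo.add hlbv (mem_univ 0) (mem_univ a) (mem_univ b)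
    simp only [hv]; linarith
  have hvle : ∀ a b : ℝ, variationOnFromTo g univ a b ≤ V := by
    intro a b
    rcases le_total a b with h | h
    · rw [variationOnFromTo.eq_of_le g univ h]
      exact ENNReal.toReal_mono hV ((eVariationOn.mono g inter_subset_left).trans hU)
    · exact (variationOnFromTo.nonpos_of_ge g univ h).trans ENNReal.toReal_nonneg
  have habs : ∀ a b : ℝ, a ≤ b → |g b - g a| ≤ variationOnFromTo g univ a b := by
    intro a b hab
    rw [variationOnFromTo.eq_of_le g univ hab, abs_sub_comm, ← Real.dist_eq, dist_edist]
    apply ENNReal.toReal_mono (hlbv a b trivial trivial)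
    apply eVariationOn.edist_le
    exacts [⟨trivial, le_rfl, hab⟩, ⟨trivial, hab, le_rfl⟩]
  set p : ℝ → ℝ := fun x => (v x + g x) / 2 with hp
  set nn : ℝ → ℝ := fun x => (v x - g x) / 2 with hnn
  have hpx : ∀ x, p x = (v x + g x) / 2 := fun _ => rfl
  have hnx : ∀ x, nn x = (v x - g x) / 2 := fun _ => rfl
  have hpmono : Monotone p := by
    intro a b hab
    have h1 := habs a b hab
    have h2 := hvadd a b
    have h3 := neg_abs_le (g b - g a)
    rw [hpx, hpx]; linarith
  have hnmono : Monotone nn := by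
    intro a b hab
    have h1 := habs a b hab
    have h2 := hvadd a b
    have h3 := le_abs_self (g b - g a)
    rw [hnx, hnx]; linarith
  have hvbound : ∀ x : ℝ, |v x| ≤ V := by
    intro x
    rcases le_total 0 x with h | h
    · rw [abs_of_nonneg (variationOnFromTo.nonneg_of_le g univ h)]
      exact hvle 0 x
    · rw [abs_of_nonpos (variationOnFromTo.nonpos_of_ge g univ h)]
      have h2 := hvle x 0
      have h3 : v x = -variationOnFromTo g univ x 0 := variationOnFromTo.eq_neg_swap g univ 0 x
      linarith
  have hgabs : ∀ a b : ℝ, |g b - g a| ≤ V := by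
    intro a b
    rcases le_total a b with h | h
    · exact (habs a b h).trans (hvle a b)
    · rw [abs_sub_comm]; exact (habs b a h).trans (hvle b a)
  set B := (V + (|g 0| + V)) / 2 with hB
  have hpbound : ∀ x : ℝ, -B ≤ p x ∧ p x ≤ B := by
    intro x
    have h1 := hvbound x
    have h2 : |g x| ≤ |g 0| + V := by
      have h3 := hgabs 0 x
      have := abs_sub_abs_le_abs_sub (g x) (g 0)
      linarith
    have h1' := abs_le.1 h1
    have h2' := abs_le.1 h2
    constructor
    · rw [hpx]; linarith [h1'.1, h2'.1]
    · rw [hpx]; linarith [h1'.2, h2'.2]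
  have hnbound : ∀ x : ℝ, -B ≤ nn x ∧ nn x ≤ B := by
    intro x
    have h1 := hvbound x
    have h2 : |g x| ≤ |g 0| + V := by
      have h3 := hgabs 0 x
      have := abs_sub_abs_le_abs_sub (g x) (g 0)
      linarith
    have h1' := abs_le.1 h1
    have h2' := abs_le.1 h2
    constructor
    · rw [hnx]; linarith [h1'.1, h2'.2]
    · rw [hnx]; linarith [h1'.2, h2'.1]
  have hbpa : BddAbove (range p) := ⟨B, by rintro _ ⟨x, rfl⟩; exact (hpbound x).2⟩
  have hbpb : BddBelow (range p) := ⟨-B, by rintro _ ⟨x, rfl⟩; exact (hpbound x).1⟩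
  have hbna : BddAbove (range nn) := ⟨B, by rintro _ ⟨x, rfl⟩; exact (hnbound x).2⟩
  have hbnb : BddBelow (range nn) := ⟨-B, by rintro _ ⟨x, rfl⟩; exact (hnbound x).1⟩
  set Mp := sSup (range p) with hMp
  set mp := sInf (range p) with hmp
  set Mn := sSup (range nn) with hMn
  set mn := sInf (range nn) with hmn
  have hple : ∀ x, p x ≤ Mp := fun x => le_csSup hbpa ⟨x, rfl⟩
  have hpge : ∀ x, mp ≤ p x := fun x => csInf_le hbpb ⟨x, rfl⟩
  have hnle : ∀ x, nn x ≤ Mn := fun x => le_csSup hbna ⟨x, rfl⟩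
  have hnge : ∀ x, mn ≤ nn x := fun x => csInf_le hbnb ⟨x, rfl⟩
  have hsum : (Mp - mp) + (Mn - mn) ≤ V := by
    refine le_of_forall_pos_le_add fun ε hε => ?_
    obtain ⟨_, ⟨x₁, rfl⟩, hx₁⟩ :=
      exists_lt_of_lt_csSup (range_nonempty p) (show Mp - ε / 4 < Mp by linarith)
    obtain ⟨_, ⟨y₁, rfl⟩, hy₁⟩ :=
      exists_lt_of_csInf_lt (range_nonempty p) (show mp < mp + ε / 4 by linarith)
    obtain ⟨_, ⟨x₂, rfl⟩, hx₂⟩ :=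
      exists_lt_of_lt_csSup (range_nonempty nn) (show Mn - ε / 4 < Mn by linarith)
    obtain ⟨_, ⟨y₂, rfl⟩, hy₂⟩ :=
      exists_lt_of_csInf_lt (range_nonempty nn) (show mn < mn + ε / 4 by linarith)
    set b := max x₁ x₂ with hb
    set a := min (min y₁ y₂) b with ha
    have hab : a ≤ b := min_le_right _ _
    have h1 : p x₁ ≤ p b := hpmono (le_max_left _ _)
    have h2 : p a ≤ p y₁ := hpmono ((min_le_left _ _).trans (min_le_left _ _))
    have h3 : nn x₂ ≤ nn b := hnmono (le_max_right _ _)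
    have h4 : nn a ≤ nn y₂ := hnmono ((min_le_left _ _).trans (min_le_right _ _))
    have h5 : (p b - p a) + (nn b - nn a) = v b - v a := by
      rw [hpx, hpx, hnx, hnx]; ring
    have h6 : v b - v a ≤ V := (hvadd a b) ▸ hvle a b
    linarith
  have hgdec : ∀ x : ℝ, g x = p x - nn x := by
    intro x; rw [hpx, hnx]; ring
  have hip1 : Integrable (fun ω => p (X ω)) P₁ :=
    integrableOfBounds P₁ X hX p hpmono (-B) B (fun x => (hpbound x).1) (fun x => (hpbound x).2)
  have hip2 : Integrable (fun ω => p (Y ω)) P₂ :=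
    integrableOfBounds P₂ Y hY p hpmono (-B) B (fun x => (hpbound x).1) (fun x => (hpbound x).2)
  have hin1 : Integrable (fun ω => nn (X ω)) P₁ :=
    integrableOfBounds P₁ X hX nn hnmono (-B) B (fun x => (hnbound x).1) (fun x => (hnbound x).2)
  have hin2 : Integrable (fun ω => nn (Y ω)) P₂ :=
    integrableOfBounds P₂ Y hY nn hnmono (-B) B (fun x => (hnbound x).1) (fun x => (hnbound x).2)
  have e1 : (∫ ω, g (X ω) ∂P₁) = (∫ ω, p (X ω) ∂P₁) - ∫ ω, nn (X ω) ∂P₁ := by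
    rw [← integral_sub hip1 hin1]
    congr 1; funext ω; rw [hgdec]
  have e2 : (∫ ω, g (Y ω) ∂P₂) = (∫ ω, p (Y ω) ∂P₂) - ∫ ω, nn (Y ω) ∂P₂ := by
    rw [← integral_sub hip2 hin2]
    congr 1; funext ω; rw [hgdec]
  have bp := coreMono P₁ P₂ X Y hX hY p hpmono mp Mp hpge hple D hD0 hDle
  have bn := coreMono P₁ P₂ X Y hX hY nn hnmono mn Mn hnge hnle D hD0 hDle
  rw [e1, e2]
  calc |((∫ ω, p (X ω) ∂P₁) - ∫ ω, nn (X ω) ∂P₁) - ((∫ ω, p (Y ω) ∂P₂) - ∫ ω, nn (Y ω) ∂P₂)|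
      = |((∫ ω, p (X ω) ∂P₁) - ∫ ω, p (Y ω) ∂P₂) -
          ((∫ ω, nn (X ω) ∂P₁) - ∫ ω, nn (Y ω) ∂P₂)| := by congr 1; ring
    _ ≤ |(∫ ω, p (X ω) ∂P₁) - ∫ ω, p (Y ω) ∂P₂| +
          |(∫ ω, nn (X ω) ∂P₁) - ∫ ω, nn (Y ω) ∂P₂| := abs_sub _ _
    _ ≤ (Mp - mp) * D + (Mn - mn) * D := add_le_add bp bn
    _ = ((Mp - mp) + (Mn - mn)) * D := by ring
    _ ≤ V * D := mul_le_mul_of_nonneg_right hsum hD0
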